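/- Let T be a rooted tree with n vertices and let m be an integer with 1 ≤ m < n. Then the sum, over all subtrees T' of T that have exactly m vertices and the same root as T (i.e. subsets of m vertices containing the root, closed under passing to parents, with the induced tree structure), of the product ∏_{v ∈ V_{T'}} n_v(T)/n_v(T'), equals the binomial coefficient n!/(m!(n−m)!). Here n_v(T') is computed inside T' and n_v(T) inside T. -/

import Mathlib

open scoped Classical
open Finset

set_option linter.unusedSectionVars false

namespace SubtreeAux


variable {n : ℕ} (parent : Fin n → Fin n) (root : Fin n)

/-- `anc v w` : `v` is an ancestor-or-self of `w`. -/
def anc (v w : Fin n) : Prop := ∃ k : ℕ, parent^[k] w = v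

variable (hroot : parent root = root) (hreach : ∀ v : Fin n, ∃ k : ℕ, parent^[k] v = root)

include hroot in
lemma root_fix (k : ℕ) : parent^[k] root = root := Function.iterate_fixed hroot k

lemma anc_refl (v : Fin n) : anc parent v v := ⟨0, rfl⟩

lemma anc_trans {u v w : Fin n} (h1 : anc parent u v) (h2 : anc parent v w) :
    anc parent u w := by
  obtain ⟨a, ha⟩ := h1; obtain ⟨b, hb⟩ := h2
  exact ⟨a + b, by rw [Function.iterate_add_apply, hb, ha]⟩

include hroot hreach in
lemma acyc {x : Fin n} {k : ℕ} (hk : parent^[k] x = x) (hx : x ≠ root) : k = 0 := by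
  by_contra h
  obtain ⟨K, hK⟩ := hreach x
  have hcyc : ∀ t : ℕ, parent^[k * t] x = x := by
    intro t
    induction t with
    | zero => simp
    | succ t ih => rw [Nat.mul_succ, Function.iterate_add_apply, hk, ih]
  have hle : K ≤ k * K := Nat.le_mul_of_pos_left K (Nat.pos_of_ne_zero h)
  have : parent^[k * K] x = root := by
    rw [← Nat.sub_add_cancel hle, Function.iterate_add_apply, hK, root_fix parent root hroot]
  exact hx ((hcyc K).symm.trans this)

include hroot hreach in
lemma anc_antisymm {x y : Fin n} (h1 : anc parent x y) (h2 : anc parent y x) : x = y := by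
  obtain ⟨a, ha⟩ := h1; obtain ⟨b, hb⟩ := h2
  by_cases hy : y = root
  · rw [hy, root_fix parent root hroot] at ha
    exact ha.symm.trans hy.symm
  · have : parent^[b + a] y = y := by rw [Function.iterate_add_apply, ha, hb]
    have hab := acyc parent root hroot hreach this hy
    have ha0 : a = 0 := by omega
    subst ha0; exact ha.symm

lemma anc_total {x y w : Fin n} (h1 : anc parent x w) (h2 : anc parent y w) :
    anc parent x y ∨ anc parent y x := by
  obtain ⟨a, ha⟩ := h1; obtain ⟨b, hb⟩ := h2
  rcases le_total a b with h | h
  · right; exact ⟨b - a, by rw [← ha, ← Function.iterate_add_apply, Nat.sub_add_cancel h, hb]⟩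
  · left; exact ⟨a - b, by rw [← hb, ← Function.iterate_add_apply, Nat.sub_add_cancel h, ha]⟩

include hreach in
lemma anc_root (w : Fin n) : anc parent root w := hreach w

lemma closed_anc {S : Finset (Fin n)} (hS : ∀ v ∈ S, parent v ∈ S) {v w : Fin n}
    (hw : w ∈ S) (h : anc parent v w) : v ∈ S := by
  obtain ⟨k, hk⟩ := h
  subst hk
  induction k with
  | zero => exact hw
  | succ k ih => rw [Function.iterate_succ_apply']; exact hS _ ih

/-- number of descendants of `v` in the whole tree -/
noncomputable def dd (v : Fin n) : ℕ := (univ.filter (anc parent v)).card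

/-- number of descendants of `v` inside `S` -/
noncomputable def dS (S : Finset (Fin n)) (v : Fin n) : ℕ := (S.filter (anc parent v)).card

lemma mem_filter_anc {S : Finset (Fin n)} {v w : Fin n} :
    w ∈ S.filter (anc parent v) ↔ w ∈ S ∧ anc parent v w := Finset.mem_filter

include hreach in
lemma dS_root {S : Finset (Fin n)} : dS parent S root = S.card := by
  have h : S.filter (anc parent root) = S := Finset.filter_true_of_mem (fun x _ => hreach x)
  rw [dS, h]

include hreach in
lemma dd_root : dd parent root = n := by
  have := dS_root parent root hreach (S := (univ : Finset (Fin n)))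
  simpa [dd, dS] using this

lemma dS_pos {S : Finset (Fin n)} {v : Fin n} (hv : v ∈ S) : 0 < dS parent S v :=
  Finset.card_pos.mpr ⟨v, Finset.mem_filter.mpr ⟨hv, anc_refl parent v⟩⟩

lemma dS_le {S : Finset (Fin n)} (v : Fin n) : dS parent S v ≤ S.card :=
  Finset.card_le_card (Finset.filter_subset _ _)



noncomputable def children (v : Fin n) : Finset (Fin n) :=
  univ.filter (fun c => parent c = v ∧ c ≠ v)

lemma anc_of_child {c v : Fin n} (h : parent c = v) : anc parent v c := ⟨1, h⟩

/-- any strict descendant of `v` lies below a unique child; existence part. -/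
lemma exists_child {v w : Fin n} (h : anc parent v w) (hw : w ≠ v) :
    ∃ c, parent c = v ∧ c ≠ v ∧ anc parent c w := by
  obtain ⟨k, hk⟩ := h
  induction k generalizing w with
  | zero => exact absurd hk hw
  | succ k ih =>
    rw [Function.iterate_succ_apply'] at hk
    by_cases hc : parent^[k] w = v
    · exact ih hw hc
    · exact ⟨parent^[k] w, hk, hc, ⟨k, rfl⟩⟩

include hroot hreach in
lemma child_disjoint {v c c' : Fin n} (hc : c ∈ children parent v) (hc' : c' ∈ children parent v)
    (hne : c ≠ c') {w : Fin n} (h1 : anc parent c w) (h2 : anc parent c' w) : False := by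
  simp only [children, mem_filter, mem_univ, true_and] at hc hc'
  have key : ∀ a b : Fin n, parent a = v → a ≠ v → parent b = v → b ≠ v →
      anc parent a b → a = b := by
    intro a b hpa hav hpb hbv ⟨j, hj⟩
    match j with
    | 0 => exact hj.symm
    | j+1 =>
      exfalso
      rw [Function.iterate_succ_apply, hpb] at hj
      exact hav (anc_antisymm parent root hroot hreach ⟨j, hj⟩ (anc_of_child parent hpa))
  rcases anc_total parent h1 h2 with h | h
  · exact hne (key c c' hc.1 hc.2 hc'.1 hc'.2 h)
  · exact hne (key c' c hc'.1 hc'.2 hc.1 hc.2 h).symm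

include hroot hreach in
lemma not_anc_child_self {v c : Fin n} (hc : c ∈ children parent v) : ¬ anc parent c v := by
  simp only [children, mem_filter, mem_univ, true_and] at hc
  intro h
  exact hc.2 (anc_antisymm parent root hroot hreach h (anc_of_child parent hc.1))

include hroot hreach in
lemma filter_anc_erase (S : Finset (Fin n)) (v : Fin n) :
    (S.filter (anc parent v)).erase v
      = (children parent v).biUnion (fun c => S.filter (anc parent c)) := by
  ext w
  simp only [mem_erase, mem_filter, mem_biUnion, children, mem_univ, true_and]
  constructor
  · rintro ⟨hwv, hwS, hanc⟩
    obtain ⟨c, h1, h2, h3⟩ := exists_child parent hanc hwv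
    exact ⟨c, ⟨h1, h2⟩, hwS, h3⟩
  · rintro ⟨c, ⟨h1, h2⟩, hwS, hanc⟩
    refine ⟨fun hwv => ?_, hwS, anc_trans parent (anc_of_child parent h1) hanc⟩
    subst hwv
    exact not_anc_child_self parent root hroot hreach
      (by simp only [children, mem_filter, mem_univ, true_and]; exact ⟨h1, h2⟩) hanc

include hroot hreach in
lemma dS_children (S : Finset (Fin n)) (hS : ∀ v ∈ S, parent v ∈ S) {v : Fin n} (hv : v ∈ S) :
    dS parent S v = 1 + ∑ c ∈ children parent v, dS parent S c := by
  have hvmem : v ∈ S.filter (anc parent v) := mem_filter.mpr ⟨hv, anc_refl parent v⟩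
  have h1 : (S.filter (anc parent v)).card = 1 + ((S.filter (anc parent v)).erase v).card := by
    rw [Finset.card_erase_of_mem hvmem]
    have : 0 < (S.filter (anc parent v)).card := Finset.card_pos.mpr ⟨v, hvmem⟩
    omega
  rw [dS, h1, filter_anc_erase parent root hroot hreach S v, Finset.card_biUnion]
  · rfl
  · intro c hc c' hc' hne
    rw [Function.onFun, Finset.disjoint_left]
    intro w hw hw'
    exact child_disjoint parent root hroot hreach hc hc' hne
      (mem_filter.mp hw).2 (mem_filter.mp hw').2




lemma mem_children {v c : Fin n} : c ∈ children parent v ↔ parent c = v ∧ c ≠ v := by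
  simp [children]

include hroot hreach in
lemma dd_child_lt {v c : Fin n} (hc : c ∈ children parent v) : dd parent c < dd parent v := by
  apply Finset.card_lt_card
  constructor
  · intro w hw
    rw [mem_filter] at hw ⊢
    exact ⟨hw.1, anc_trans parent (anc_of_child parent ((mem_children parent).mp hc).1) hw.2⟩
  · intro hsub
    have hv : v ∈ univ.filter (anc parent v) := mem_filter.mpr ⟨mem_univ v, anc_refl parent v⟩
    have := (mem_filter.mp (hsub hv)).2
    exact not_anc_child_self parent root hroot hreach hc this

include hroot hreach in
lemma sum_leaf (S : Finset (Fin n)) (hS : ∀ v ∈ S, parent v ∈ S) :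
    ∀ (N : ℕ) (v : Fin n), dd parent v ≤ N →
    (∑ u ∈ (S.filter (anc parent v)).filter (fun u => dS parent S u = 1),
        ∏ w ∈ ((S.filter (anc parent v)).filter (fun w => anc parent w u)).erase u,
          ((dS parent S w : ℚ) / ((dS parent S w : ℚ) - 1)))
      = (dS parent S v : ℚ) := by
  intro N
  induction N with
  | zero =>
    intro v hv
    have : 0 < dd parent v :=
      Finset.card_pos.mpr ⟨v, mem_filter.mpr ⟨mem_univ v, anc_refl parent v⟩⟩
    omega
  | succ N ih =>
    intro v hv
    by_cases hvS : v ∈ S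
    · by_cases hleaf : dS parent S v = 1
      · -- v is a leaf of S
        have hvmem : v ∈ S.filter (anc parent v) := mem_filter.mpr ⟨hvS, anc_refl parent v⟩
        have hset : S.filter (anc parent v) = {v} := by
          obtain ⟨a, ha⟩ := Finset.card_eq_one.mp hleaf
          rw [ha] at hvmem ⊢
          rw [Finset.mem_singleton] at hvmem
          rw [hvmem]
        rw [hset, Finset.filter_singleton, if_pos hleaf, Finset.sum_singleton]
        have hempty : (({v} : Finset (Fin n)).filter (fun w => anc parent w v)).erase v = ∅ := by
          rw [Finset.eq_empty_iff_forall_notMem]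
          intro w hw
          rw [mem_erase, mem_filter, Finset.mem_singleton] at hw
          exact hw.1 hw.2.1
        rw [hempty, Finset.prod_empty, hleaf, Nat.cast_one]
      · -- v is internal
        have hdS2 : 2 ≤ dS parent S v := by
          have := Finset.card_pos.mpr ⟨v, mem_filter.mpr ⟨hvS, anc_refl parent v⟩⟩
          unfold dS at *
          omega
        -- the set of leaves below v splits over children
        have hvnotleaf : v ∉ (S.filter (anc parent v)).filter (fun u => dS parent S u = 1) := by
          rw [mem_filter]
          rintro ⟨-, h⟩
          omega
        have hstep1 : (S.filter (anc parent v)).filter (fun u => dS parent S u = 1)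
            = ((S.filter (anc parent v)).erase v).filter (fun u => dS parent S u = 1) := by
          rw [Finset.filter_erase, Finset.erase_eq_of_notMem hvnotleaf]
        have hdisj : (↑(children parent v) : Set (Fin n)).PairwiseDisjoint
            (fun c => (S.filter (anc parent c)).filter (fun u => dS parent S u = 1)) := by
          intro c hc c' hc' hne
          rw [Function.onFun, Finset.disjoint_left]
          intro w hw hw'
          rw [mem_filter, mem_filter] at hw hw'
          exact child_disjoint parent root hroot hreach (by exact_mod_cast hc)
            (by exact_mod_cast hc') hne hw.1.2 hw'.1.2
        rw [hstep1, filter_anc_erase parent root hroot hreach S v, Finset.filter_biUnion,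
          Finset.sum_biUnion hdisj]
        -- now transform each child's contribution
        have hchild : ∀ c ∈ children parent v,
            (∑ u ∈ (S.filter (anc parent c)).filter (fun u => dS parent S u = 1),
              ∏ w ∈ ((S.filter (anc parent v)).filter (fun w => anc parent w u)).erase u,
                ((dS parent S w : ℚ) / ((dS parent S w : ℚ) - 1)))
            = ((dS parent S v : ℚ) / ((dS parent S v : ℚ) - 1)) * (dS parent S c : ℚ) := by
          intro c hc
          obtain ⟨hpc, hcv⟩ := (mem_children parent).mp hc
          have hAset : ∀ u ∈ (S.filter (anc parent c)).filter (fun u => dS parent S u = 1),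
              ((S.filter (anc parent v)).filter (fun w => anc parent w u)).erase u
              = insert v (((S.filter (anc parent c)).filter (fun w => anc parent w u)).erase u)
              := by
            intro u hu
            rw [mem_filter, mem_filter] at hu
            obtain ⟨⟨huS, hcu⟩, -⟩ := hu
            have hvu : v ≠ u := by
              rintro rfl
              exact not_anc_child_self parent root hroot hreach hc hcu
            ext w
            simp only [mem_insert, mem_erase, mem_filter]
            constructor
            · rintro ⟨hwu, ⟨hwS, hvw⟩, hwancu⟩
              rcases anc_total parent hwancu hcu with h | h
              · -- anc w c : w is ancestor-or-self of c
                obtain ⟨j, hj⟩ := h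
                match j with
                | 0 => exact Or.inr ⟨hwu, ⟨hwS, hj ▸ anc_refl parent c⟩, hwancu⟩
                | j+1 =>
                  left
                  rw [Function.iterate_succ_apply, hpc] at hj
                  exact anc_antisymm parent root hroot hreach ⟨j, hj⟩ hvw
              · exact Or.inr ⟨hwu, ⟨hwS, h⟩, hwancu⟩
            · rintro (hwv | ⟨hwu, ⟨hwS, hcw⟩, hwancu⟩)
              · subst hwv
                exact ⟨hvu, ⟨hvS, anc_refl parent w⟩,
                  anc_trans parent (anc_of_child parent hpc) hcu⟩
              · exact ⟨hwu, ⟨hwS, anc_trans parent (anc_of_child parent hpc) hcw⟩, hwancu⟩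
          have hvnot : ∀ u : Fin n,
              v ∉ ((S.filter (anc parent c)).filter (fun w => anc parent w u)).erase u := by
            intro u hmem
            rw [mem_erase, mem_filter, mem_filter] at hmem
            exact not_anc_child_self parent root hroot hreach hc hmem.2.1.2
          rw [Finset.sum_congr rfl (fun u hu => by
            rw [hAset u hu, Finset.prod_insert (hvnot u)]), ← Finset.mul_sum,
            ih c (by have := dd_child_lt parent root hroot hreach hc; omega)]
        rw [Finset.sum_congr rfl hchild, ← Finset.mul_sum]
        have hsumc : (∑ c ∈ children parent v, (dS parent S c : ℚ))
            = (dS parent S v : ℚ) - 1 := by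
          have := dS_children parent root hroot hreach S hS hvS
          have h2 : ((dS parent S v : ℚ)) = 1 + ∑ c ∈ children parent v, (dS parent S c : ℚ) := by
            rw [this]; push_cast; ring
          rw [h2]; ring
        rw [hsumc]
        have hne : (dS parent S v : ℚ) - 1 ≠ 0 := by
          have : (2 : ℚ) ≤ (dS parent S v : ℚ) := by exact_mod_cast hdS2
          linarith
        field_simp
    · -- v ∉ S : everything is empty / zero
      have hempty : S.filter (anc parent v) = ∅ := by
        apply Finset.filter_eq_empty_iff.mpr
        intro w hw hanc
        exact hvS (closed_anc parent hS hw hanc)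
      rw [hempty]
      simp [dS, hempty]
      rfl



/-- weight of a subtree -/
noncomputable def weight (S : Finset (Fin n)) : ℚ :=
  ∏ v ∈ S, ((dd parent v : ℚ) / (dS parent S v : ℚ))

include hroot hreach in
lemma sum_leaf_root (S : Finset (Fin n)) (hS : ∀ v ∈ S, parent v ∈ S) :
    (∑ u ∈ S.filter (fun u => dS parent S u = 1),
        ∏ w ∈ (S.filter (fun w => anc parent w u)).erase u,
          ((dS parent S w : ℚ) / ((dS parent S w : ℚ) - 1)))
      = (S.card : ℚ) := by
  have hfix : S.filter (anc parent root) = S :=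
    Finset.filter_true_of_mem (fun x _ => hreach x)
  have := sum_leaf parent root hroot hreach S hS (dd parent root) root le_rfl
  rw [hfix, dS_root parent root hreach] at this
  exact this

include hreach in
lemma parent_fix_eq_root {u : Fin n} (hu : parent u = u) : u = root := by
  obtain ⟨k, hk⟩ := hreach u
  rwa [Function.iterate_fixed hu k] at hk

include hroot hreach in
lemma weight_erase (S : Finset (Fin n)) {u : Fin n} (hu : u ∈ S) (hl : dS parent S u = 1) :
    weight parent S *
      (∏ w ∈ (S.filter (fun w => anc parent w u)).erase u,
        ((dS parent S w : ℚ) / ((dS parent S w : ℚ) - 1)))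
    = (dd parent u : ℚ) * weight parent (S.erase u) := by
  classical
  set S' := S.erase u with hS'
  have hins : insert u S' = S := Finset.insert_erase hu
  have hunotS' : u ∉ S' := Finset.notMem_erase u S
  -- dS S v in terms of dS S' v
  have hsplit : ∀ v : Fin n, dS parent S v
      = dS parent S' v + (if anc parent v u then 1 else 0) := by
    intro v
    rw [← hins, dS, Finset.filter_insert]
    by_cases h : anc parent v u
    · rw [if_pos h, if_pos h, Finset.card_insert_of_notMem (fun hmem => hunotS' (Finset.mem_filter.mp hmem).1)]
      rfl
    · rw [if_neg h, if_neg h, Nat.add_zero]; rfl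
  -- the product set equals S'.filter (anc · u)
  have hAset : (S.filter (fun w => anc parent w u)).erase u
      = S'.filter (fun w => anc parent w u) := by
    rw [hS', Finset.filter_erase]
  -- split weight over the ancestor filter
  have key : ∀ T : Finset (Fin n), (∀ x ∈ T, x ∈ S') →
      (∏ v ∈ T, ((dd parent v : ℚ) / (dS parent S v : ℚ))) *
      (∏ w ∈ T.filter (fun w => anc parent w u),
        ((dS parent S w : ℚ) / ((dS parent S w : ℚ) - 1)))
      = ∏ v ∈ T, ((dd parent v : ℚ) / (dS parent S' v : ℚ)) := by
    intro T hT
    induction T using Finset.induction with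
    | empty => simp
    | @insert a T₀ hx ih =>
      have haS' : a ∈ S' := hT a (Finset.mem_insert_self a T₀)
      have hdpos : 0 < dS parent S' a := dS_pos parent haS'
      have hT₀ : ∀ x ∈ T₀, x ∈ S' := fun x hx' => hT x (Finset.mem_insert_of_mem hx')
      rw [Finset.filter_insert, Finset.prod_insert hx]
      by_cases h : anc parent a u
      · rw [if_pos h, Finset.prod_insert (fun hmem => hx (Finset.mem_filter.mp hmem).1),
          Finset.prod_insert hx]
        rw [← ih hT₀]
        have hda : (dS parent S a : ℚ) = (dS parent S' a : ℚ) + 1 := by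
          rw [hsplit a, if_pos h]; push_cast; ring
        have h1 : (dS parent S' a : ℚ) ≠ 0 := by
          exact_mod_cast hdpos.ne'
        have h2 : (dS parent S a : ℚ) ≠ 0 := by
          rw [hda]
          intro hzero
          have : (0:ℚ) < (dS parent S' a : ℚ) + 1 := by positivity
          rw [hzero] at this
          exact lt_irrefl _ this
        have h3 : (dS parent S a : ℚ) - 1 = (dS parent S' a : ℚ) := by rw [hda]; ring
        have hscal : (dd parent a : ℚ) / (dS parent S a : ℚ) *
            ((dS parent S a : ℚ) / ((dS parent S a : ℚ) - 1))
            = (dd parent a : ℚ) / (dS parent S' a : ℚ) := by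
          rw [h3, div_mul_div_comm, mul_comm ((dd parent a : ℚ)) _,
            mul_div_mul_left _ _ h2]
        calc ((dd parent a : ℚ) / (dS parent S a : ℚ)) *
              (∏ v ∈ T₀, ((dd parent v : ℚ) / (dS parent S v : ℚ))) *
              (((dS parent S a : ℚ) / ((dS parent S a : ℚ) - 1)) *
               ∏ w ∈ T₀.filter (fun w => anc parent w u),
                 ((dS parent S w : ℚ) / ((dS parent S w : ℚ) - 1)))
            = ((dd parent a : ℚ) / (dS parent S a : ℚ) *
                ((dS parent S a : ℚ) / ((dS parent S a : ℚ) - 1))) *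
              ((∏ v ∈ T₀, ((dd parent v : ℚ) / (dS parent S v : ℚ))) *
               ∏ w ∈ T₀.filter (fun w => anc parent w u),
                 ((dS parent S w : ℚ) / ((dS parent S w : ℚ) - 1))) := by ring
          _ = ((dd parent a : ℚ) / (dS parent S' a : ℚ)) *
              ((∏ v ∈ T₀, ((dd parent v : ℚ) / (dS parent S v : ℚ))) *
               ∏ w ∈ T₀.filter (fun w => anc parent w u),
                 ((dS parent S w : ℚ) / ((dS parent S w : ℚ) - 1))) := by rw [hscal]
      · rw [if_neg h, Finset.prod_insert hx, ← ih hT₀]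
        have hda : (dS parent S a : ℚ) = (dS parent S' a : ℚ) := by
          rw [hsplit a, if_neg h, Nat.add_zero]
        rw [hda]
        ring
  have hkey := key S' (fun x hx => hx)
  rw [hAset]
  calc weight parent S * _
      = ((dd parent u : ℚ) / (dS parent S u : ℚ)) *
        ((∏ v ∈ S', ((dd parent v : ℚ) / (dS parent S v : ℚ))) *
         (∏ w ∈ S'.filter (fun w => anc parent w u),
           ((dS parent S w : ℚ) / ((dS parent S w : ℚ) - 1)))) := by
        rw [weight, ← Finset.mul_prod_erase S _ hu, ← hS']; ring
    _ = ((dd parent u : ℚ) / (dS parent S u : ℚ)) * weight parent S' := by rw [hkey, weight]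
    _ = (dd parent u : ℚ) * weight parent S' := by rw [hl]; norm_num



noncomputable def adm (m : ℕ) : Finset (Finset (Fin n)) :=
  Finset.univ.powerset.filter
    (fun S : Finset (Fin n) => root ∈ S ∧ (∀ v ∈ S, parent v ∈ S) ∧ S.card = m)

lemma mem_adm {m : ℕ} {S : Finset (Fin n)} :
    S ∈ adm parent root m ↔ root ∈ S ∧ (∀ v ∈ S, parent v ∈ S) ∧ S.card = m := by
  simp [adm]

include hroot hreach in
lemma card_mul_weight (S : Finset (Fin n)) (hS : ∀ v ∈ S, parent v ∈ S) :
    (S.card : ℚ) * weight parent S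
      = ∑ u ∈ S.filter (fun u => dS parent S u = 1),
          (dd parent u : ℚ) * weight parent (S.erase u) := by
  rw [← sum_leaf_root parent root hroot hreach S hS, Finset.sum_mul]
  refine Finset.sum_congr rfl (fun u hu => ?_)
  rw [Finset.mem_filter] at hu
  rw [mul_comm]
  exact weight_erase parent root hroot hreach S hu.1 hu.2

include hroot hreach in
lemma leaf_erase_facts {S : Finset (Fin n)} (hrootS : root ∈ S) (hS : ∀ v ∈ S, parent v ∈ S)
    (hcard : 2 ≤ S.card) {u : Fin n} (hu : u ∈ S) (hl : dS parent S u = 1) :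
    u ≠ root ∧ root ∈ S.erase u ∧ (∀ v ∈ S.erase u, parent v ∈ S.erase u) ∧
      u ∉ S.erase u ∧ parent u ∈ S.erase u := by
  have hune : u ≠ root := by
    intro h
    rw [h, dS_root parent root hreach] at hl
    omega
  have hpu : parent u ≠ u := fun h => hune (parent_fix_eq_root parent root hreach h)
  have hnochild : ∀ v ∈ S, v ≠ u → parent v ≠ u := by
    intro v hv hvu hpar
    have hsub : ({u, v} : Finset (Fin n)) ⊆ S.filter (anc parent u) := by
      intro x hx
      rw [Finset.mem_insert, Finset.mem_singleton] at hx
      rcases hx with rfl | rfl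
      · exact Finset.mem_filter.mpr ⟨hu, anc_refl parent x⟩
      · exact Finset.mem_filter.mpr ⟨hv, ⟨1, hpar⟩⟩
    have := Finset.card_le_card hsub
    rw [Finset.card_pair (fun h => hvu h.symm)] at this
    unfold dS at hl
    omega
  refine ⟨hune, Finset.mem_erase.mpr ⟨hune.symm, hrootS⟩, ?_, Finset.notMem_erase u S,
    Finset.mem_erase.mpr ⟨hpu, hS u hu⟩⟩
  intro v hv
  rw [Finset.mem_erase] at hv ⊢
  exact ⟨hnochild v hv.2 hv.1, hS v hv.2⟩

include hroot hreach in
lemma insert_facts {S : Finset (Fin n)} (hrootS : root ∈ S) (hS : ∀ v ∈ S, parent v ∈ S)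
    {u : Fin n} (hu : u ∉ S) (hpu : parent u ∈ S) :
    root ∈ insert u S ∧ (∀ v ∈ insert u S, parent v ∈ insert u S) ∧
      (insert u S).card = S.card + 1 ∧ dS parent (insert u S) u = 1 := by
  have hclosed : ∀ v ∈ insert u S, parent v ∈ insert u S := by
    intro v hv
    rw [Finset.mem_insert] at hv
    rcases hv with rfl | hv
    · exact Finset.mem_insert_of_mem hpu
    · exact Finset.mem_insert_of_mem (hS v hv)
  refine ⟨Finset.mem_insert_of_mem hrootS, hclosed, Finset.card_insert_of_notMem hu, ?_⟩
  have hune : u ≠ root := fun h => hu (h ▸ hrootS)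
  have : (insert u S).filter (anc parent u) = {u} := by
    ext w
    rw [Finset.mem_filter, Finset.mem_singleton]
    constructor
    · rintro ⟨hwmem, hanc⟩
      by_contra hwu
      obtain ⟨c, hc1, hc2, hc3⟩ := exists_child parent hanc (fun h => hwu h)
      have hcmem : c ∈ insert u S := closed_anc parent hclosed hwmem hc3
      rw [Finset.mem_insert] at hcmem
      rcases hcmem with rfl | hcS
      · exact hc2 rfl
      · exact hu (hc1 ▸ hS c hcS)
    · rintro rfl
      exact ⟨Finset.mem_insert_self _ _, anc_refl parent _⟩
  rw [dS, this, Finset.card_singleton]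

include hroot hreach in
lemma addable_sum {S : Finset (Fin n)} (hrootS : root ∈ S) (hS : ∀ v ∈ S, parent v ∈ S) :
    ∑ u ∈ univ.filter (fun u => u ∉ S ∧ parent u ∈ S), dd parent u = n - S.card := by
  have hdisj : (↑(univ.filter (fun u => u ∉ S ∧ parent u ∈ S)) : Set (Fin n)).PairwiseDisjoint
      (fun u => univ.filter (anc parent u)) := by
    intro a ha b hb hne
    simp only [Finset.coe_filter, Set.mem_setOf_eq] at ha hb
    rw [Function.onFun, Finset.disjoint_left]
    intro w hw hw'
    rw [Finset.mem_filter] at hw hw'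
    have key : ∀ x y : Fin n, x ∉ S → parent y ∈ S → anc parent x y → x ≠ y → False := by
      rintro x y hx hy ⟨j, hj⟩ hxy
      match j with
      | 0 => exact hxy hj.symm
      | j+1 =>
        rw [Function.iterate_succ_apply] at hj
        exact hx (closed_anc parent hS hy ⟨j, hj⟩)
    rcases anc_total parent hw.2 hw'.2 with h | h
    · exact key a b ha.2.1 hb.2.2 h hne
    · exact key b a hb.2.1 ha.2.2 h hne.symm
  have hcover : (univ.filter (fun u => u ∉ S ∧ parent u ∈ S)).biUnion
      (fun u => univ.filter (anc parent u)) = univ \ S := by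
    ext w
    rw [Finset.mem_biUnion, Finset.mem_sdiff]
    constructor
    · rintro ⟨u, hu, hw⟩
      rw [Finset.mem_filter] at hu hw
      refine ⟨Finset.mem_univ w, fun hwS => ?_⟩
      exact hu.2.1 (closed_anc parent hS hwS hw.2)
    · rintro ⟨-, hwS⟩
      have hex : ∃ k : ℕ, parent^[k] w ∈ S := by
        obtain ⟨k, hk⟩ := hreach w
        exact ⟨k, hk ▸ hrootS⟩
      have hk := Nat.find_spec hex
      have hkpos : 0 < Nat.find hex := by
        rcases Nat.eq_zero_or_pos (Nat.find hex) with h0 | h0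
        · rw [h0] at hk; exact absurd hk hwS
        · exact h0
      refine ⟨parent^[Nat.find hex - 1] w, Finset.mem_filter.mpr ⟨Finset.mem_univ _, ?_, ?_⟩,
        Finset.mem_filter.mpr ⟨Finset.mem_univ w, ⟨Nat.find hex - 1, rfl⟩⟩⟩
      · exact Nat.find_min hex (by omega)
      · have heq : parent (parent^[Nat.find hex - 1] w) = parent^[Nat.find hex - 1 + 1] w :=
          (Function.iterate_succ_apply' parent _ w).symm
        rw [heq, Nat.sub_add_cancel hkpos]
        exact hk
  calc ∑ u ∈ univ.filter (fun u => u ∉ S ∧ parent u ∈ S), dd parent u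
      = ((univ.filter (fun u => u ∉ S ∧ parent u ∈ S)).biUnion
          (fun u => univ.filter (anc parent u))).card := (Finset.card_biUnion hdisj).symm
    _ = (univ \ S).card := by rw [hcover]
    _ = n - S.card := by rw [Finset.card_sdiff_of_subset (Finset.subset_univ S), Finset.card_univ,
          Fintype.card_fin]

include hroot hreach in
lemma reindex (m : ℕ) (hm : 1 ≤ m) :
    (∑ S ∈ adm parent root (m+1), ∑ u ∈ S.filter (fun u => dS parent S u = 1),
        (dd parent u : ℚ) * weight parent (S.erase u))
    = ∑ S ∈ adm parent root m, ∑ u ∈ univ.filter (fun u => u ∉ S ∧ parent u ∈ S),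
        (dd parent u : ℚ) * weight parent S := by
  rw [Finset.sum_sigma', Finset.sum_sigma']
  refine Finset.sum_nbij' (fun p => ⟨p.1.erase p.2, p.2⟩) (fun q => ⟨insert q.2 q.1, q.2⟩)
    ?_ ?_ ?_ ?_ ?_
  · rintro ⟨S, u⟩ hp
    rw [Finset.mem_sigma, mem_adm, Finset.mem_filter] at hp
    obtain ⟨⟨hrootS, hS, hcard⟩, hu, hl⟩ := hp
    obtain ⟨hune, h1, h2, h3, h4⟩ := leaf_erase_facts parent root hroot hreach hrootS hS
      (by omega) hu hl
    rw [Finset.mem_sigma, mem_adm, Finset.mem_filter]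
    exact ⟨⟨h1, h2, by rw [Finset.card_erase_of_mem hu, hcard]; omega⟩,
      Finset.mem_univ _, h3, h4⟩
  · rintro ⟨S, u⟩ hq
    rw [Finset.mem_sigma, mem_adm, Finset.mem_filter] at hq
    obtain ⟨⟨hrootS, hS, hcard⟩, -, hu, hpu⟩ := hq
    obtain ⟨h1, h2, h3, h4⟩ := insert_facts parent root hroot hreach hrootS hS hu hpu
    rw [Finset.mem_sigma, mem_adm, Finset.mem_filter]
    exact ⟨⟨h1, h2, by rw [h3, hcard]⟩, Finset.mem_insert_self u S, h4⟩
  · rintro ⟨S, u⟩ hp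
    rw [Finset.mem_sigma, mem_adm, Finset.mem_filter] at hp
    have : insert u (S.erase u) = S := Finset.insert_erase hp.2.1
    simp only [this]
  · rintro ⟨S, u⟩ hq
    rw [Finset.mem_sigma, mem_adm, Finset.mem_filter] at hq
    have : (insert u S).erase u = S := Finset.erase_insert hq.2.2.1
    simp only [this]
  · rintro ⟨S, u⟩ hp
    rfl

include hroot hreach in
lemma main_sum (m : ℕ) (h1 : 1 ≤ m) (h2 : m ≤ n) :
    ∑ S ∈ adm parent root m, weight parent S = (n.choose m : ℚ) := by
  induction m with
  | zero => omega
  | succ m ih =>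
    rcases Nat.eq_zero_or_pos m with rfl | hm
    · -- base case m = 1
      have hadm : adm parent root 1 = {{root}} := by
        ext S
        rw [mem_adm, Finset.mem_singleton]
        constructor
        · rintro ⟨hr, -, hc⟩
          rw [Finset.eq_singleton_iff_unique_mem]
          refine ⟨hr, fun x hx => ?_⟩
          obtain ⟨a, ha⟩ := Finset.card_eq_one.mp hc
          rw [ha, Finset.mem_singleton] at hx hr
          rw [hx, hr]
        · intro h
          rw [h]
          refine ⟨Finset.mem_singleton_self root, ?_, Finset.card_singleton root⟩
          intro v hv
          rw [Finset.mem_singleton] at hv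
          rw [hv, hroot]
          exact Finset.mem_singleton_self root
      rw [hadm, Finset.sum_singleton, Nat.choose_one_right]
      rw [weight, Finset.prod_singleton, dd_root parent root hreach,
        dS_root parent root hreach, Finset.card_singleton]
      norm_num
    · have hm1 : 1 ≤ m := hm
      have hmn : m ≤ n := by omega
      have ihm := ih hm1 hmn
      have hstep : ((m : ℚ) + 1) * ∑ S ∈ adm parent root (m+1), weight parent S
          = ((n : ℚ) - m) * (n.choose m : ℚ) := by
        rw [Finset.mul_sum]
        calc ∑ S ∈ adm parent root (m+1), ((m : ℚ) + 1) * weight parent S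
            = ∑ S ∈ adm parent root (m+1), (S.card : ℚ) * weight parent S := by
              refine Finset.sum_congr rfl (fun S hS => ?_)
              rw [mem_adm] at hS
              rw [hS.2.2]
              push_cast
              ring_nf
          _ = ∑ S ∈ adm parent root (m+1), ∑ u ∈ S.filter (fun u => dS parent S u = 1),
                (dd parent u : ℚ) * weight parent (S.erase u) := by
              refine Finset.sum_congr rfl (fun S hS => ?_)
              rw [mem_adm] at hS
              exact card_mul_weight parent root hroot hreach S hS.2.1
          _ = ∑ S ∈ adm parent root m, ∑ u ∈ univ.filter (fun u => u ∉ S ∧ parent u ∈ S),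
                (dd parent u : ℚ) * weight parent S :=
              reindex parent root hroot hreach m hm1
          _ = ∑ S ∈ adm parent root m, ((n : ℚ) - m) * weight parent S := by
              refine Finset.sum_congr rfl (fun S hS => ?_)
              rw [mem_adm] at hS
              rw [← Finset.sum_mul]
              congr 1
              have := addable_sum parent root hroot hreach hS.1 hS.2.1
              have hcast : ((∑ u ∈ univ.filter (fun u => u ∉ S ∧ parent u ∈ S),
                  dd parent u : ℕ) : ℚ) = ((n - S.card : ℕ) : ℚ) := by
                exact_mod_cast congrArg (Nat.cast : ℕ → ℚ) this
              push_cast at hcast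
              rw [hcast, hS.2.2, Nat.cast_sub hmn]
          _ = ((n : ℚ) - m) * (n.choose m : ℚ) := by rw [← Finset.mul_sum, ihm]
      have hchoose : ((n.choose (m+1) : ℚ)) * ((m : ℚ) + 1)
          = (n.choose m : ℚ) * ((n : ℚ) - (m : ℚ)) := by
        have := Nat.add_one_mul_choose_eq n m
        have h' : n.choose (m+1) * (m+1) = n.choose m * (n - m) := by
          rw [Nat.choose_succ_right_eq]
        calc ((n.choose (m+1) : ℚ)) * ((m : ℚ) + 1)
            = ((n.choose (m+1) * (m+1) : ℕ) : ℚ) := by push_cast; ring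
          _ = ((n.choose m * (n - m) : ℕ) : ℚ) := by rw [h']
          _ = (n.choose m : ℚ) * ((n : ℚ) - (m : ℚ)) := by
              push_cast [Nat.cast_sub hmn]; ring
      have hne : ((m : ℚ) + 1) ≠ 0 := by positivity
      have hfin : ((m : ℚ) + 1) * ∑ S ∈ adm parent root (m+1), weight parent S
          = ((m : ℚ) + 1) * (n.choose (m+1) : ℚ) := by
        rw [hstep, mul_comm ((n:ℚ) - (m:ℚ)) _, ← hchoose]; ring
      have := mul_left_cancel₀ hne hfin
      exact_mod_cast this

end SubtreeAux

/-- Theorem 1 of the paper: let `T` be a rooted tree with `n` vertices,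
encoded by a parent function on `Fin n` fixing the root, with every vertex reaching the
root by iterating `parent`.  For `1 ≤ m < n`, the sum over all subtrees `T'` with `m`
vertices and the same root (subsets containing the root, closed under passing to
parents) of `∏_{v ∈ V_{T'}} n_v(T)/n_v(T')` equals `n!/(m!(n−m)!)`.  Here
`n_v(·)` is the number of vertices of the subtree rooted at `v` (for a parent-closed
subset `S`, the descendants of `v` inside `T'` are exactly the descendants of `v` in
`T` that lie in `S`). -/
theorem subtree_sum_eq_binomial (n m : ℕ) (hm : 1 ≤ m) (hmn : m < n)
    (parent : Fin n → Fin n) (root : Fin n)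
    (hroot : parent root = root)
    (hreach : ∀ v : Fin n, ∃ k : ℕ, parent^[k] v = root) :
    ∑ S ∈ Finset.univ.powerset.filter
        (fun S : Finset (Fin n) =>
          root ∈ S ∧ (∀ v ∈ S, parent v ∈ S) ∧ S.card = m),
      ∏ v ∈ S,
        (((Finset.univ.filter (fun w : Fin n => ∃ k : ℕ, parent^[k] w = v)).card : ℚ) /
          ((S.filter (fun w : Fin n => ∃ k : ℕ, parent^[k] w = v)).card : ℚ))
      = (n.factorial : ℚ) / ((m.factorial : ℚ) * ((n - m).factorial : ℚ)) := by
  have h := SubtreeAux.main_sum parent root hroot hreach m hm (le_of_lt hmn)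
  have hrhs : ((n.choose m : ℚ))
      = (n.factorial : ℚ) / ((m.factorial : ℚ) * ((n - m).factorial : ℚ)) :=
    Nat.cast_choose ℚ (le_of_lt hmn)
  rw [← hrhs]
  exact h
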